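/- For every threefold triple system TS_3(v), the rank over the field F_2 of its generalized incidence matrix N_2 is at most (v−1)(v−2)/2, i.e. at most binom(v−1,2). -/

import Mathlib

open Finset

/-- `IsPBD B lam K`: the indexed family of blocks `B` (a multiset of subsets of the
point set `V`, one block per index) is a pairwise balanced design `PBD_lam(|V|, K)`:
every block has size in `K`, and every pair of distinct points lies in exactly `lam`
blocks (counted with multiplicity). -/
def IsPBD {V : Type*} [DecidableEq V] {ι : Type*} [Fintype ι]
    (B : ι → Finset V) (lam : ℕ) (K : Set ℕ) : Prop :=
  (∀ i, (B i).card ∈ K) ∧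
  (∀ p : Finset V, p.card = 2 → (Finset.univ.filter (fun i => p ⊆ B i)).card = lam)

/-- The generalized incidence matrix `N₂`: rows indexed by 2-element subsets of the
point set, columns indexed by the blocks (with multiplicity); entry is 1 if the pair
is contained in the block, and 0 otherwise. -/
def N2 {V : Type*} [DecidableEq V] {ι : Type*} (F : Type*) [Zero F] [One F]
    (B : ι → Finset V) : Matrix {P : Finset V // P.card = 2} ι F :=
  Matrix.of fun P i => if (P : Finset V) ⊆ B i then 1 else 0

lemma card_pairs_through {m : ℕ} (s : Finset (Fin m)) (hs : s.card = 3) (x : Fin m) :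
    2 ∣ (Finset.univ.filter (fun P : {P : Finset (Fin m) // P.card = 2} =>
      (P : Finset (Fin m)) ⊆ s ∧ x ∈ (P : Finset (Fin m)))).card := by
  classical
  have hcard : (Finset.univ.filter (fun P : {P : Finset (Fin m) // P.card = 2} =>
      (P : Finset (Fin m)) ⊆ s ∧ x ∈ (P : Finset (Fin m)))).card
      = ((s.powersetCard 2).filter (fun P => x ∈ P)).card := by
    refine Finset.card_bij (fun P _ => (P : Finset (Fin m))) ?_ ?_ ?_
    · rintro ⟨P, hP2⟩ hP
      simp only [mem_filter, mem_univ, true_and] at hP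
      simp [mem_filter, mem_powersetCard, hP.1, hP.2, hP2]
    · rintro ⟨P, _⟩ _ ⟨Q, _⟩ _ h
      exact Subtype.ext h
    · intro P hP
      simp only [mem_filter, mem_powersetCard] at hP
      exact ⟨⟨P, hP.1.2⟩, by simp [mem_filter, hP.1.1, hP.2], rfl⟩
  rw [hcard]
  by_cases hx : x ∈ s
  · have himg : (s.powersetCard 2).filter (fun P => x ∈ P)
        = (s.erase x).image (fun y => ({x, y} : Finset (Fin m))) := by
      ext P
      simp only [mem_filter, mem_powersetCard, mem_image, mem_erase]
      constructor
      · rintro ⟨⟨hPs, hP2⟩, hxP⟩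
        obtain ⟨a, b, hab, rfl⟩ := Finset.card_eq_two.1 hP2
        rcases Finset.mem_insert.1 hxP with rfl | hb
        · exact ⟨b, ⟨fun h => hab h.symm, hPs (by simp)⟩, rfl⟩
        · rcases Finset.mem_singleton.1 hb with rfl
          exact ⟨a, ⟨hab, hPs (by simp)⟩, by rw [Finset.pair_comm]⟩
      · rintro ⟨y, ⟨hyx, hys⟩, rfl⟩
        refine ⟨⟨?_, ?_⟩, by simp⟩
        · intro z hz
          rcases Finset.mem_insert.1 hz with rfl | hz
          · exact hx
          · exact Finset.mem_singleton.1 hz ▸ hys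
        · rw [Finset.card_insert_of_notMem (by simp [Ne.symm hyx]), Finset.card_singleton]
    rw [himg, Finset.card_image_of_injOn, Finset.card_erase_of_mem hx, hs]
    · intro a ha b hb h
      have h' : ({x, a} : Finset (Fin m)) = {x, b} := h
      have : a ∈ ({x, b} : Finset (Fin m)) := h' ▸ (by simp : a ∈ ({x, a} : Finset (Fin m)))
      rcases Finset.mem_insert.1 this with rfl | h2
      · exact absurd rfl (Finset.mem_erase.1 ha).1
      · exact Finset.mem_singleton.1 h2
  · have : (s.powersetCard 2).filter (fun P => x ∈ P) = ∅ := by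
      ext P
      simp only [mem_filter, mem_powersetCard, Finset.notMem_empty, iff_false]
      rintro ⟨⟨hPs, _⟩, hxP⟩
      exact hx (hPs hxP)
    simp [this]

/-- For every threefold triple system `TS_3(v)`, the rank over `F₂` of its generalized
incidence matrix `N₂` is at most `(v-1)(v-2)/2 = binom(v-1, 2)`. -/
theorem ts3_two_rank_le {v : ℕ} {ι : Type*} [Fintype ι]
    (B : ι → Finset (Fin v)) (hB : IsPBD B 3 {3}) :
    (N2 (ZMod 2) B).rank ≤ (v - 1) * (v - 2) / 2 := by
  classical
  rcases Nat.lt_or_ge v 2 with hv | hv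
  · calc (N2 (ZMod 2) B).rank ≤ Fintype.card {P : Finset (Fin v) // P.card = 2} :=
          Matrix.rank_le_card_height _
      _ = (Fintype.card (Fin v)).choose 2 := Fintype.card_finset_len 2
      _ ≤ (v - 1) * (v - 2) / 2 := by
          rw [Fintype.card_fin]; interval_cases v <;> simp
  · obtain ⟨n, rfl⟩ : ∃ n, v = n + 2 := ⟨v - 2, by omega⟩
    set F := ZMod 2
    set Pr := {P : Finset (Fin (n + 2)) // P.card = 2}
    set f : (Pr → F) →ₗ[F] (ι → F) := (N2 F B).transpose.mulVecLin with hf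
    -- rank as finrank of range of f
    have hrank : (N2 F B).rank = Module.finrank F (LinearMap.range f) := by
      rw [← Matrix.rank_transpose]; rfl
    -- the kernel vectors
    set last : Fin (n + 2) := Fin.last (n + 1)
    set S := {x : Fin (n + 2) // x ≠ last}
    set u : S → (Pr → F) := fun x P => if (x : Fin (n + 2)) ∈ (P : Finset (Fin (n + 2))) then 1 else 0 with hu
    have hker : ∀ x : S, u x ∈ LinearMap.ker f := by
      intro x
      rw [LinearMap.mem_ker]
      funext i
      have hentry : f (u x) i =
          ∑ P : Pr, (if ((P : Finset (Fin (n+2))) ⊆ B i ∧ (x : Fin (n+2)) ∈ (P : Finset (Fin (n+2)))) then (1 : F) else 0) := by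
        simp only [hf, Matrix.mulVecLin_apply, Matrix.mulVec, dotProduct,
          Matrix.transpose_apply, N2, Matrix.of_apply, hu]
        refine Finset.sum_congr rfl fun P _ => ?_
        by_cases h1 : (P : Finset (Fin (n+2))) ⊆ B i <;>
          by_cases h2 : (x : Fin (n+2)) ∈ (P : Finset (Fin (n+2))) <;> simp [h1, h2]
      rw [hentry, Finset.sum_boole]
      have h3 : (B i).card = 3 := hB.1 i
      obtain ⟨k, hk⟩ := card_pairs_through (B i) h3 (x : Fin (n+2))
      simp only [Pi.zero_apply]
      rw [hk, Nat.cast_mul]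
      have h2 : ((2 : ℕ) : F) = 0 := by decide
      rw [h2, zero_mul]
    -- linear independence
    have hli : LinearIndependent F u := by
      rw [Fintype.linearIndependent_iff]
      intro g hg x
      have hxlast : (x : Fin (n+2)) ≠ last := x.2
      have hPcard : ({(x : Fin (n+2)), last} : Finset (Fin (n+2))).card = 2 := by
        rw [Finset.card_insert_of_notMem (by simp [hxlast]), Finset.card_singleton]
      set P : Pr := ⟨{(x : Fin (n+2)), last}, hPcard⟩
      have := congrFun hg P
      rw [Finset.sum_apply] at this
      have hterm : ∀ y : S, (g y • u y) P = if y = x then g x else 0 := by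
        intro y
        by_cases hyx : y = x
        · subst hyx
          simp [hu, P, Pi.smul_apply]
        · have hyx' : (y : Fin (n+2)) ≠ (x : Fin (n+2)) := fun h => hyx (Subtype.ext h)
          have : (y : Fin (n+2)) ∉ ({(x : Fin (n+2)), last} : Finset (Fin (n+2))) := by
            simp [hyx', y.2]
          simp [hu, P, this, hyx]
      rw [Finset.sum_congr rfl (fun y _ => hterm y), Finset.sum_ite_eq' Finset.univ x] at this
      simpa using this
    -- lift to kernel
    have hli' : LinearIndependent F (fun x : S => (⟨u x, hker x⟩ : LinearMap.ker f)) := by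
      apply LinearIndependent.of_comp (LinearMap.ker f).subtype
      convert hli
      rfl
    have hS : Fintype.card S = n + 1 := by
      simp [S, Fintype.card_subtype_compl]
    have hkerge : n + 1 ≤ Module.finrank F (LinearMap.ker f) := by
      rw [← hS]
      exact hli'.fintype_card_le_finrank
    have hrn : Module.finrank F (LinearMap.range f) + Module.finrank F (LinearMap.ker f)
        = (n + 2).choose 2 := by
      rw [LinearMap.finrank_range_add_finrank_ker f, Module.finrank_pi]
      simp [Pr, Fintype.card_finset_len]
    have hch : (n + 2).choose 2 = (n + 1) + (n + 1).choose 2 := by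
      rw [Nat.choose_succ_succ (n+1) 1, Nat.choose_one_right]
    have hgoal : (n + 2 - 1) * (n + 2 - 2) / 2 = (n + 1).choose 2 := by
      rw [Nat.choose_two_right]; simp
    rw [hrank, hgoal]
    omega
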